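/- There is no semi-dynamical system φ on the circle S¹ = {x ∈ ℝ² : ⟨x,x⟩ = 1} under which some singleton {p} ⊆ S¹ is an invariant, globally asymptotically stable attractor (i.e., with domain of attraction equal to all of S¹). -/

import Mathlib

open unitInterval

/-- `φ` is a (global) semi-dynamical system (semi-flow) on `M`: a jointly continuous map
`[0,∞) × M → M` satisfying the identity and semi-group axioms. -/
def IsSemiFlow {M : Type*} [TopologicalSpace M] (φ : NNReal → M → M) : Prop :=
  Continuous (fun p : NNReal × M => φ p.1 p.2) ∧
    (∀ x : M, φ 0 x = x) ∧
    ∀ (s t : NNReal) (x : M), φ s (φ t x) = φ (s + t) x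

/-- `φ` has no start points: every point is `φ t y` for some `t > 0`. -/
def HasNoStartPoints {M : Type*} [TopologicalSpace M] (φ : NNReal → M → M) : Prop :=
  ∀ x : M, ∃ t : NNReal, 0 < t ∧ ∃ y : M, φ t y = x

/-- `A` is invariant under `φ`. -/
def IsInvariantSet {M : Type*} [TopologicalSpace M] (φ : NNReal → M → M) (A : Set M) : Prop :=
  ∀ t : NNReal, φ t '' A = A

/-- Lyapunov stability of `A` under `φ`. -/
def IsLyapunovStable {M : Type*} [TopologicalSpace M] (φ : NNReal → M → M) (A : Set M) : Prop :=
  ∀ Uε : Set M, IsOpen Uε → A ⊆ Uε →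
    ∃ Uδ : Set M, IsOpen Uδ ∧ A ⊆ Uδ ∧ Uδ ⊆ Uε ∧ ∀ t : NNReal, φ t '' Uδ ⊆ Uε

/-- The semi-flow initialized at `p` converges to `A`. -/
def AttractsFrom {M : Type*} [TopologicalSpace M] (φ : NNReal → M → M) (A : Set M)
    (p : M) : Prop :=
  ∀ V : Set M, IsOpen V → A ⊆ V → ∃ T : NNReal, ∀ t : NNReal, T ≤ t → φ t p ∈ V

/-- Local attractivity of `A` under `φ`. -/
def IsLocallyAttractive {M : Type*} [TopologicalSpace M] (φ : NNReal → M → M)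
    (A : Set M) : Prop :=
  ∃ W : Set M, IsOpen W ∧ A ⊆ W ∧ ∀ p ∈ W, AttractsFrom φ A p

/-- `A` is a compact, invariant, (locally) asymptotically stable attractor under `φ`. -/
def IsAsymptoticallyStableAttractor {M : Type*} [TopologicalSpace M] (φ : NNReal → M → M)
    (A : Set M) : Prop :=
  IsCompact A ∧ IsInvariantSet φ A ∧ IsLyapunovStable φ A ∧ IsLocallyAttractive φ A

/-- The domain of attraction of `A` under `φ`. -/
def domainOfAttraction {M : Type*} [TopologicalSpace M] (φ : NNReal → M → M)
    (A : Set M) : Set M :=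
  {p : M | AttractsFrom φ A p}

section AuxWinding

open Complex Real

noncomputable def cmap (y : EuclideanSpace ℝ (Fin 2)) : ℂ := (y 0 : ℂ) + (y 1 : ℂ) * Complex.I

lemma cmap_cont : Continuous cmap := by
  have h0 : Continuous fun y : EuclideanSpace ℝ (Fin 2) => y 0 :=
    (EuclideanSpace.proj (0 : Fin 2) : EuclideanSpace ℝ (Fin 2) →L[ℝ] ℝ).continuous
  have h1 : Continuous fun y : EuclideanSpace ℝ (Fin 2) => y 1 :=
    (EuclideanSpace.proj (1 : Fin 2) : EuclideanSpace ℝ (Fin 2) →L[ℝ] ℝ).continuous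
  exact (Complex.continuous_ofReal.comp h0).add ((Complex.continuous_ofReal.comp h1).mul continuous_const)

lemma cmap_abs (y : EuclideanSpace ℝ (Fin 2)) (hy : y ∈ Metric.sphere (0 : EuclideanSpace ℝ (Fin 2)) 1) :
    ‖cmap y‖ = 1 := by
  rw [mem_sphere_zero_iff_norm, EuclideanSpace.norm_eq] at hy
  rw [cmap, Complex.norm_add_mul_I]
  simpa [Fin.sum_univ_two, _root_.sq_abs] using hy

lemma cmap_ne_zero (y : EuclideanSpace ℝ (Fin 2)) (hy : y ∈ Metric.sphere (0 : EuclideanSpace ℝ (Fin 2)) 1) :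
    cmap y ≠ 0 := by
  intro h
  have := cmap_abs y hy
  rw [h] at this
  simp at this

lemma cmap_inj (y z : EuclideanSpace ℝ (Fin 2)) (h : cmap y = cmap z) : y = z := by
  have h0 : y 0 = z 0 := by have := congrArg Complex.re h; simpa [cmap] using this
  have h1 : y 1 = z 1 := by have := congrArg Complex.im h; simpa [cmap] using this
  ext i; fin_cases i <;> assumption

noncomputable def circPt (s : ℝ) : EuclideanSpace ℝ (Fin 2) :=
  (EuclideanSpace.equiv (Fin 2) ℝ).symm ![Real.cos (2 * π * s), Real.sin (2 * π * s)]

lemma circPt_mem (s : ℝ) : circPt s ∈ Metric.sphere (0 : EuclideanSpace ℝ (Fin 2)) 1 := by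
  rw [mem_sphere_zero_iff_norm, EuclideanSpace.norm_eq]
  simp only [Fin.sum_univ_two, Real.norm_eq_abs]
  show Real.sqrt (|Real.cos (2 * π * s)| ^ 2 + |Real.sin (2 * π * s)| ^ 2) = 1
  rw [_root_.sq_abs, _root_.sq_abs, ← Real.sqrt_one]
  congr 1
  rw [← Real.sin_sq_add_cos_sq (2 * π * s)]; ring

lemma circPt_cont : Continuous circPt := by
  apply Continuous.comp (EuclideanSpace.equiv (Fin 2) ℝ).symm.continuous
  apply continuous_pi
  intro i
  fin_cases i
  · simpa using (by fun_prop : Continuous fun a : ℝ => Real.cos (2 * π * a))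
  · simpa using (by fun_prop : Continuous fun a : ℝ => Real.sin (2 * π * a))

lemma cmap_circPt (s : ℝ) : cmap (circPt s) = Complex.exp ((2 * π * s : ℝ) * Complex.I) := by
  rw [Complex.exp_mul_I]
  show (Real.cos (2*π*s) : ℂ) + (Real.sin (2*π*s) : ℂ) * Complex.I = _
  rw [← Complex.ofReal_cos, ← Complex.ofReal_sin]

lemma circPt_one : circPt 1 = circPt 0 := by
  unfold circPt
  norm_num

lemma prod_div_telescope (n : ℕ) (h : ℕ → ℂ) (hne : ∀ i, h i ≠ 0) :
    ∏ i ∈ Finset.range n, (h (i + 1) / h i) = h n / h 0 := by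
  induction n with
  | zero => simp [div_self (hne 0)]
  | succ m ih =>
      rw [Finset.prod_range_succ, ih, div_mul_div_comm, mul_comm, mul_div_mul_right _ _ (hne m)]

abbrev Sph : Type := ↥(Metric.sphere (0 : EuclideanSpace ℝ (Fin 2)) 1)

lemma timeMap_surj
    (φ : NNReal → Sph → Sph)
    (hc : Continuous fun p : NNReal × Sph => φ p.1 p.2)
    (h0 : ∀ x, φ 0 x = x) (T : NNReal) (q : Sph) :
    ∃ x, φ T x = q := by
  classical
  set g : NNReal × Sph → ℂ := fun a => cmap ((φ a.1 a.2 : Sph) : EuclideanSpace ℝ (Fin 2)) with hg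
  have hgc : Continuous g := cmap_cont.comp (continuous_subtype_val.comp hc)
  have habs : ∀ a, ‖g a‖ = 1 := fun a => cmap_abs _ (φ a.1 a.2).2
  have hgne : ∀ a, g a ≠ 0 := fun a => cmap_ne_zero _ (φ a.1 a.2).2
  -- uniform continuity on a compact set
  have hK : IsCompact ((Set.Icc 0 T) ×ˢ (Set.univ : Set Sph)) :=
    isCompact_Icc.prod isCompact_univ
  have hUC := hK.uniformContinuousOn_of_continuous hgc.continuousOn
  rw [Metric.uniformContinuousOn_iff] at hUC
  obtain ⟨δ, hδ, hH⟩ := hUC 1 one_pos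
  obtain ⟨N, hN⟩ := exists_nat_gt ((T : ℝ) / δ)
  set n : ℕ := N + 1 with hn
  have hnpos : 0 < (n : ℝ) := by positivity
  have hTn : (T : ℝ) / n < δ := by
    rw [div_lt_iff₀ hnpos]
    have h1 : (T : ℝ) / δ < n := lt_of_le_of_lt hN.le (by exact_mod_cast Nat.lt_succ_self N)
    calc (T : ℝ) = ((T : ℝ) / δ) * δ := by field_simp
    _ < n * δ := mul_lt_mul_of_pos_right h1 hδ
    _ = δ * n := mul_comm _ _
  set t : ℕ → NNReal := fun i => (i : NNReal) * T / (n : NNReal) with ht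
  have hco : ∀ i : ℕ, ((t i : NNReal) : ℝ) = (i : ℝ) * T / n := by
    intro i; rw [ht]; push_cast; ring
  have ht0 : t 0 = 0 := by simp [ht]
  have htn : t n = T := by
    have : ((t n : NNReal) : ℝ) = ((T : NNReal) : ℝ) := by
      rw [hco]; field_simp
    exact_mod_cast this
  have htmem : ∀ i ≤ n, t i ∈ Set.Icc (0 : NNReal) T := by
    intro i hi
    refine ⟨by positivity, ?_⟩
    rw [← NNReal.coe_le_coe, hco]
    rw [div_le_iff₀ hnpos]
    have : (i : ℝ) ≤ n := by exact_mod_cast hi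
    nlinarith [NNReal.coe_nonneg T]
  -- consecutive values of g are close
  have hclose : ∀ i < n, ∀ x : Sph, ‖g (t (i+1), x) - g (t i, x)‖ < 1 := by
    intro i hi x
    have hd : dist (g (t (i+1), x)) (g (t i, x)) < 1 := by
      apply hH _ ⟨htmem (i+1) (by omega), Set.mem_univ _⟩ _ ⟨htmem i (by omega), Set.mem_univ _⟩
      rw [Prod.dist_eq]
      have hdist : dist (t (i+1)) (t i) < δ := by
        rw [NNReal.dist_eq, hco, hco]
        have he : ((i:ℝ)+1) * T / n - (i:ℝ) * T / n = (T:ℝ)/n := by push_cast; ring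
        rw [show ((i:ℝ)+1) = ((i+1:ℕ):ℝ) by push_cast; ring] at he
        rw [he, _root_.abs_of_nonneg (by positivity : (0:ℝ) ≤ (T:ℝ)/n)]
        exact hTn
      simp only [max_lt_iff]
      exact ⟨hdist, by rw [dist_self]; exact hδ⟩
    rwa [Complex.dist_eq] at hd
  -- the ratios lie in the slit plane
  have hratio : ∀ i < n, ∀ x : Sph,
      ‖g (t (i+1), x) / g (t i, x) - 1‖ < 1 := by
    intro i hi x
    rw [div_sub_one (hgne (t i, x)), norm_div, habs, div_one]
    exact hclose i hi x
  have hre : ∀ i < n, ∀ x : Sph, 0 < (g (t (i+1), x) / g (t i, x)).re := by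
    intro i hi x
    have h1 := hratio i hi x
    have h2 : |(g (t (i+1), x) / g (t i, x) - 1).re| ≤ ‖_‖ := Complex.abs_re_le_norm _
    have h3 : (g (t (i+1), x) / g (t i, x) - 1).re
        = (g (t (i+1), x) / g (t i, x)).re - 1 := by simp
    rw [h3] at h2
    have := abs_le.mp h2
    linarith [this.1]
  have hslit : ∀ i < n, ∀ x : Sph,
      g (t (i+1), x) / g (t i, x) ∈ Complex.slitPlane := fun i hi x => Or.inl (hre i hi x)
  have hrne : ∀ i < n, ∀ x : Sph, g (t (i+1), x) / g (t i, x) ≠ 0 :=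
    fun i hi x => div_ne_zero (hgne _) (hgne _)
  -- the spherical path
  set xs : ℝ → Sph := fun s => ⟨circPt s, circPt_mem s⟩ with hxs
  have hxsc : Continuous xs := circPt_cont.subtype_mk _
  -- the log sum
  set w : ℝ → ℂ := fun s =>
    ∑ i ∈ Finset.range n, Complex.log (g (t (i+1), xs s) / g (t i, xs s)) with hw
  have hwc : Continuous w := by
    apply continuous_finset_sum
    intro i hi
    rw [Finset.mem_range] at hi
    rw [continuous_iff_continuousAt]
    intro s
    have hgc2 : ∀ τ : NNReal, Continuous fun s : ℝ => g (τ, xs s) := fun τ =>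
      hgc.comp ((continuous_const.prodMk hxsc))
    have hd : ContinuousAt (fun s : ℝ => g (t (i+1), xs s) / g (t i, xs s)) s :=
      ((hgc2 (t (i+1))).continuousAt).div ((hgc2 (t i)).continuousAt) (hgne _)
    exact hd.clog (hslit i hi (xs s))
  -- exponential of the sum telescopes
  have hexpw : ∀ s : ℝ, Complex.exp (w s) = g (T, xs s) / g (0, xs s) := by
    intro s
    rw [hw]
    rw [Complex.exp_sum]
    have : ∀ i ∈ Finset.range n,
        Complex.exp (Complex.log (g (t (i+1), xs s) / g (t i, xs s)))
          = g (t (i+1), xs s) / g (t i, xs s) := by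
      intro i hi
      rw [Finset.mem_range] at hi
      exact Complex.exp_log (hrne i hi (xs s))
    rw [Finset.prod_congr rfl this,
      prod_div_telescope n (fun i => g (t i, xs s)) (fun i => hgne _), htn, ht0]
  -- main identity
  have hmain : ∀ s : ℝ, g (T, xs s) = Complex.exp ((2 * π * s : ℝ) * Complex.I + w s) := by
    intro s
    have hg0 : g (0, xs s) = Complex.exp ((2 * π * s : ℝ) * Complex.I) := by
      show cmap ((φ 0 (xs s) : Sph) : EuclideanSpace ℝ (Fin 2)) = _
      rw [h0]
      exact cmap_circPt s
    rw [Complex.exp_add, ← hg0, hexpw s, mul_comm, div_mul_cancel₀ _ (hgne _)]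
  -- w is purely imaginary
  have hwre : ∀ s : ℝ, (w s).re = 0 := by
    intro s
    have h1 : ‖Complex.exp (w s)‖ = 1 := by
      rw [hexpw s, norm_div, habs, habs]
      norm_num
    rw [Complex.norm_exp] at h1
    exact Real.exp_injective (by rw [h1, Real.exp_zero])
  -- the angle function
  set A : ℝ → ℝ := fun s => 2 * π * s + (w s).im with hA
  have hAc : Continuous A :=
    ((continuous_const.mul continuous_id)).add (Complex.continuous_im.comp hwc)
  have hkey : ∀ s : ℝ, g (T, xs s) = Complex.exp ((A s : ℝ) * Complex.I) := by
    intro s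
    rw [hmain s]
    congr 1
    apply Complex.ext
    · simp [hA, hwre s]
    · simp [hA]
  have hA1 : A 1 = A 0 + 2 * π := by
    have hxseq : xs 1 = xs 0 := Subtype.ext circPt_one
    rw [hA]
    simp only []
    rw [show w 1 = w 0 by rw [hw]; simp only [hxseq]]
    ring
  -- choose the target angle
  set β : ℝ := Complex.arg (cmap (q : EuclideanSpace ℝ (Fin 2))) with hβ
  set k : ℤ := ⌈(A 0 - β) / (2 * π)⌉ with hk
  have hπ : (0:ℝ) < 2 * π := by positivity
  have hτmem : β + 2 * π * k ∈ Set.Icc (A 0) (A 1) := by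
    constructor
    · have := Int.le_ceil ((A 0 - β) / (2 * π))
      rw [div_le_iff₀ hπ, ← hk] at this
      linarith
    · have := Int.ceil_lt_add_one ((A 0 - β) / (2 * π))
      rw [show ((A 0 - β) / (2*π) + 1) = (A 0 - β + 2*π)/(2*π) by field_simp] at this
      rw [lt_div_iff₀ hπ, ← hk] at this
      rw [hA1]
      linarith
  obtain ⟨s, hs01, hAs⟩ := intermediate_value_Icc zero_le_one hAc.continuousOn hτmem
  refine ⟨xs s, ?_⟩
  apply Subtype.ext
  apply cmap_inj
  have h1 : g (T, xs s) = cmap ((φ T (xs s) : Sph) : EuclideanSpace ℝ (Fin 2)) := rfl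
  rw [← h1, hkey s, hAs]
  have h2 : ((β + 2 * π * k : ℝ) : ℂ) * Complex.I
      = (β : ℝ) * Complex.I + (k : ℤ) * (2 * π * Complex.I) := by push_cast; ring
  rw [h2, Complex.exp_add, Complex.exp_int_mul_two_pi_mul_I, mul_one]
  have h3 := Complex.norm_mul_exp_arg_mul_I (cmap (q : EuclideanSpace ℝ (Fin 2)))
  rw [cmap_abs _ q.2] at h3
  simpa using h3

end AuxWinding

/-- There is no semi-dynamical system on the circle `S¹` under which some singleton `{p}` is an
invariant, globally asymptotically stable attractor. -/

theorem no_semiflow_circle_point_global_attractor :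
    ¬ ∃ (φ : NNReal → ↥(Metric.sphere (0 : EuclideanSpace ℝ (Fin 2)) 1) →
          ↥(Metric.sphere (0 : EuclideanSpace ℝ (Fin 2)) 1))
        (p : ↥(Metric.sphere (0 : EuclideanSpace ℝ (Fin 2)) 1)),
        IsSemiFlow φ ∧
        IsAsymptoticallyStableAttractor φ {p} ∧
        domainOfAttraction φ {p} = Set.univ := by
  rintro ⟨φ, p, ⟨hcont, hid, hsemi⟩, ⟨-, -, hLya, -⟩, hdom⟩
  classical
  -- the antipodal point
  have hqmem : -(p : EuclideanSpace ℝ (Fin 2)) ∈ Metric.sphere (0 : EuclideanSpace ℝ (Fin 2)) 1 := by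
    rw [mem_sphere_zero_iff_norm, norm_neg, ← mem_sphere_zero_iff_norm]
    exact p.2
  set q : Sph := ⟨-(p : EuclideanSpace ℝ (Fin 2)), hqmem⟩ with hq
  have hqp : p ≠ q := by
    intro h
    have h2 : (p : EuclideanSpace ℝ (Fin 2)) = -(p : EuclideanSpace ℝ (Fin 2)) := congrArg Subtype.val h
    have h3 : (p : EuclideanSpace ℝ (Fin 2)) = 0 := by
      have h5 : (p : EuclideanSpace ℝ (Fin 2)) + (p : EuclideanSpace ℝ (Fin 2)) = 0 :=
        eq_neg_iff_add_eq_zero.mp h2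
      have h6 : (2 : ℝ) • (p : EuclideanSpace ℝ (Fin 2)) = 0 := by
        rw [two_smul]; exact h5
      rcases smul_eq_zero.mp h6 with h7 | h7
      · norm_num at h7
      · exact h7
    have h4 := p.2
    rw [mem_sphere_zero_iff_norm, h3, norm_zero] at h4
    norm_num at h4
  -- stability neighbourhood avoiding q
  have hUε : IsOpen ({q}ᶜ : Set Sph) := isOpen_compl_singleton
  have hpUε : ({p} : Set Sph) ⊆ {q}ᶜ := by
    intro y hy
    rw [Set.mem_singleton_iff] at hy
    simp [hy, hqp]
  obtain ⟨Uδ, hUδo, hpUδ, hUδsub, hUδinv⟩ := hLya _ hUε hpUε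
  -- every point eventually enters Uδ
  have hattr : ∀ x : Sph, ∃ T : NNReal, φ T x ∈ Uδ ∧ ∀ t : NNReal, T ≤ t → φ t x ∈ Uδ := by
    intro x
    have hx : AttractsFrom φ {p} x := by
      have : x ∈ domainOfAttraction φ {p} := by rw [hdom]; trivial
      exact this
    obtain ⟨T, hT⟩ := hx Uδ hUδo hpUδ
    exact ⟨T, hT T le_rfl, hT⟩
  choose Tx hTx1 _ using hattr
  -- finite subcover
  set U : Sph → Set Sph := fun x => (fun y => φ (Tx x) y) ⁻¹' Uδ with hU
  have hUopen : ∀ x, IsOpen (U x) := by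
    intro x
    apply IsOpen.preimage _ hUδo
    exact hcont.comp (continuous_const.prodMk continuous_id)
  have hcover : (Set.univ : Set Sph) ⊆ ⋃ x, U x := by
    intro y _
    exact Set.mem_iUnion.2 ⟨y, hTx1 y⟩
  obtain ⟨F, hF⟩ := isCompact_univ.elim_finite_subcover U hUopen hcover
  set T : NNReal := F.sup Tx with hT
  -- the time-T map misses q
  have hmiss : ∀ y : Sph, φ T y ≠ q := by
    intro y hy
    obtain ⟨x, hxF, hyx⟩ := Set.mem_iUnion₂.1 (hF (Set.mem_univ y))
    have h1 : φ (Tx x) y ∈ Uδ := hyx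
    have h2 : φ T y = φ (T - Tx x) (φ (Tx x) y) := by
      rw [hsemi, tsub_add_cancel_of_le (Finset.le_sup hxF)]
    have h3 : φ T y ∈ ({q}ᶜ : Set Sph) := by
      rw [h2]
      exact hUδinv (T - Tx x) ⟨φ (Tx x) y, h1, rfl⟩
    rw [hy] at h3
    exact h3 rfl
  obtain ⟨x, hx⟩ := timeMap_surj φ hcont hid T q
  exact hmiss x hx
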